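/- Under the RMJ-based ranking model with identity central ranking and dispersion q ∈ (0,1), for a top-k list π_k with last element z and any item y ∉ R(π_k), the conditional probability λ(π_k ⊕ y)/λ(π_k) that the (k+1)-th most preferred item is y equals q^{h(y|z)-1} / (1 + q + ... + q^{n-k-1}), where h(y|z) = Σ_{x ∈ R^c(π_k)} 1{z < x ≤ y} if y > z, and h(y|z) = n - k - Σ_{x ∈ R^c(π_k)} 1{y < x < z} if y < z. -/

import Mathlib

open Finset

/-- ψ(n,q) = ∏_{i=1}^{n} (1 + q + ... + q^{i-1}). -/
def psi (n : ℕ) (q : ℝ) : ℝ := ∏ i ∈ Finset.range n, ∑ j ∈ Finset.range (i + 1), q ^ j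

/-- Reverse major index of a full permutation. -/
def dR {n : ℕ} (π : Equiv.Perm (Fin n)) : ℕ :=
  ∑ i : Fin (n - 1),
    if π ⟨i.val + 1, by have := i.isLt; omega⟩ < π ⟨i.val, by have := i.isLt; omega⟩ then
      n - (i.val + 1) else 0

/-- Truncated reverse major index of a top-k list. -/
def dtop {n k : ℕ} (f : Fin k → Fin n) : ℕ :=
  ∑ i : Fin (k - 1),
    if f ⟨i.val + 1, by have := i.isLt; omega⟩ < f ⟨i.val, by have := i.isLt; omega⟩ then
      n - (i.val + 1) else 0

/-- L(π_k): number of items not appearing in the top-k list that are smaller than its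
last entry. -/
def Ltop {n k : ℕ} (f : Fin k → Fin n) : ℕ :=
  if h : 0 < k then
    (Finset.univ.filter
      (fun x : Fin n => x ∉ Finset.image f Finset.univ ∧ x < f ⟨k - 1, by omega⟩)).card
  else 0

/-! ### Auxiliary material -/

section CardLemmas

variable {n : ℕ}

lemma cardA1 (C : Finset (Fin n)) (z w : Fin n) (hz : z ∉ C) (hw : w ∈ C) (hwz : w < z) :
    (C.filter (· < z)).card
      = (C.filter (· < w)).card + 1 + (C.filter (fun x => w < x ∧ x < z)).card := by
  have hset : C.filter (· < z)
      = insert w (C.filter (· < w) ∪ C.filter (fun x => w < x ∧ x < z)) := by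
    ext x
    simp only [Finset.mem_insert, Finset.mem_union, Finset.mem_filter]
    constructor
    · rintro ⟨hx, hxz⟩
      rcases lt_trichotomy x w with h | h | h
      · exact Or.inr (Or.inl ⟨hx, h⟩)
      · exact Or.inl h
      · exact Or.inr (Or.inr ⟨hx, h, hxz⟩)
    · rintro (rfl | ⟨hx, h⟩ | ⟨hx, h1, h2⟩)
      · exact ⟨hw, hwz⟩
      · exact ⟨hx, h.trans hwz⟩
      · exact ⟨hx, h2⟩
  have hdisj : Disjoint (C.filter (· < w)) (C.filter (fun x => w < x ∧ x < z)) := by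
    rw [Finset.disjoint_left]
    intro x hx1 hx2
    simp only [Finset.mem_filter] at hx1 hx2
    exact absurd (hx1.2.trans hx2.2.1) (lt_irrefl x)
  have hmem : w ∉ C.filter (· < w) ∪ C.filter (fun x => w < x ∧ x < z) := by
    simp [lt_irrefl]
  rw [hset, Finset.card_insert_of_notMem hmem, Finset.card_union_of_disjoint hdisj]
  omega

lemma cardA2 (C : Finset (Fin n)) (z w : Fin n) (hz : z ∉ C) (hw : w ∈ C) (hzw : z < w) :
    (C.filter (· < w)).card + 1
      = (C.filter (· < z)).card + (C.filter (fun x => z < x ∧ x ≤ w)).card := by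
  have hset : insert w (C.filter (· < w))
      = C.filter (· < z) ∪ C.filter (fun x => z < x ∧ x ≤ w) := by
    ext x
    simp only [Finset.mem_insert, Finset.mem_union, Finset.mem_filter]
    constructor
    · rintro (rfl | ⟨hx, h⟩)
      · exact Or.inr ⟨hw, hzw, le_refl x⟩
      · rcases lt_trichotomy x z with h2 | rfl | h2
        · exact Or.inl ⟨hx, h2⟩
        · exact absurd hx hz
        · exact Or.inr ⟨hx, h2, le_of_lt h⟩
    · rintro (⟨hx, h⟩ | ⟨hx, h1, h2⟩)
      · exact Or.inr ⟨hx, h.trans hzw⟩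
      · rcases eq_or_lt_of_le h2 with rfl | h3
        · exact Or.inl rfl
        · exact Or.inr ⟨hx, h3⟩
  have hdisj : Disjoint (C.filter (· < z)) (C.filter (fun x => z < x ∧ x ≤ w)) := by
    rw [Finset.disjoint_left]
    intro x hx1 hx2
    simp only [Finset.mem_filter] at hx1 hx2
    exact absurd (hx1.2.trans hx2.2.1) (lt_irrefl x)
  have hmem : w ∉ C.filter (· < w) := by simp [lt_irrefl]
  rw [← Finset.card_union_of_disjoint hdisj, ← hset, Finset.card_insert_of_notMem hmem]

lemma cardA3 (C : Finset (Fin n)) (z : Fin n) (hz : z ∉ C) :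
    (C.filter (· < z)).card + (C.filter (fun x => z < x)).card = C.card := by
  have h : C.filter (fun x => ¬ x < z) = C.filter (fun x => z < x) := by
    apply Finset.filter_congr
    intro x hx
    have : x ≠ z := fun h => hz (h ▸ hx)
    simp only [not_lt, eq_iff_iff]
    constructor
    · intro h2; exact lt_of_le_of_ne h2 (Ne.symm this)
    · exact le_of_lt
  rw [← h]
  exact Finset.card_filter_add_card_filter_not _

/-- abstract h function -/
def Hv (N : ℕ) (C : Finset (Fin n)) (z y : Fin n) : ℕ :=
  if z < y then (C.filter (fun x => z < x ∧ x ≤ y)).card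
  else N - (C.filter (fun x => y < x ∧ x < z)).card

lemma Hv_mem (C : Finset (Fin n)) (z y : Fin n) (hz : z ∉ C) (hy : y ∈ C) :
    Hv C.card C z y ∈ Finset.Icc 1 C.card := by
  have hsub1 : (C.filter (· < z)).card ≤ C.card := Finset.card_le_card (Finset.filter_subset _ _)
  rw [Finset.mem_Icc, Hv]
  by_cases hzy : z < y
  · rw [if_pos hzy]
    constructor
    · rw [Nat.one_le_iff_ne_zero, ← Nat.pos_iff_ne_zero, Finset.card_pos]
      exact ⟨y, Finset.mem_filter.mpr ⟨hy, hzy, le_refl y⟩⟩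
    · exact Finset.card_le_card (Finset.filter_subset _ _)
  · have hyz : y < z := lt_of_le_of_ne (not_lt.mp hzy) (fun h => hz (h ▸ hy))
    rw [if_neg hzy]
    have key := cardA1 C z y hz hy hyz
    omega

lemma Hv_injOn (C : Finset (Fin n)) (z : Fin n) (hz : z ∉ C) :
    Set.InjOn (Hv C.card C z) (C : Set (Fin n)) := by
  have hA3 := cardA3 C z hz
  have main : ∀ w1 w2 : Fin n, w1 ∈ C → w2 ∈ C → w1 < w2 →
      Hv C.card C z w1 ≠ Hv C.card C z w2 := by
    intro w1 w2 hw1 hw2 hlt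
    have hne1' : w1 ≠ z := fun h => hz (h ▸ hw1)
    have hne2' : w2 ≠ z := fun h => hz (h ▸ hw2)
    rw [Hv, Hv]
    by_cases h1 : z < w1
    · have h2 : z < w2 := h1.trans hlt
      rw [if_pos h1, if_pos h2]
      have hss : C.filter (fun x => z < x ∧ x ≤ w1) ⊂ C.filter (fun x => z < x ∧ x ≤ w2) := by
        rw [Finset.ssubset_iff_of_subset]
        · exact ⟨w2, Finset.mem_filter.mpr ⟨hw2, h2, le_refl _⟩,
            fun hmem => absurd ((Finset.mem_filter.mp hmem).2.2) (not_le.mpr hlt)⟩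
        · intro x hx
          rw [Finset.mem_filter] at hx ⊢
          exact ⟨hx.1, hx.2.1, hx.2.2.trans (le_of_lt hlt)⟩
      exact Nat.ne_of_lt (Finset.card_lt_card hss)
    · have hlt1 : w1 < z := lt_of_le_of_ne (not_lt.mp h1) hne1'
      have key1 := cardA1 C z w1 hz hw1 hlt1
      by_cases h2 : z < w2
      · rw [if_neg h1, if_pos h2]
        have hb : (C.filter (fun x => z < x ∧ x ≤ w2)).card
            ≤ (C.filter (fun x => z < x)).card := by
          apply Finset.card_le_card
          intro x hx
          rw [Finset.mem_filter] at hx ⊢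
          exact ⟨hx.1, hx.2.1⟩
        omega
      · have hlt2 : w2 < z := lt_of_le_of_ne (not_lt.mp h2) hne2'
        rw [if_neg h1, if_neg h2]
        have hss : C.filter (fun x => w2 < x ∧ x < z) ⊂ C.filter (fun x => w1 < x ∧ x < z) := by
          rw [Finset.ssubset_iff_of_subset]
          · exact ⟨w2, Finset.mem_filter.mpr ⟨hw2, hlt, hlt2⟩,
              fun hmem => absurd ((Finset.mem_filter.mp hmem).2.1) (lt_irrefl w2)⟩
          · intro x hx
            rw [Finset.mem_filter] at hx ⊢
            exact ⟨hx.1, hlt.trans hx.2.1, hx.2.2⟩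
        have hcc := Finset.card_lt_card hss
        have h1' : (C.filter (· < z)).card ≤ C.card :=
          Finset.card_le_card (Finset.filter_subset _ _)
        have hsub2 : (C.filter (fun x => w1 < x ∧ x < z)).card
            ≤ (C.filter (· < z)).card := by
          apply Finset.card_le_card
          intro x hx
          rw [Finset.mem_filter] at hx ⊢
          exact ⟨hx.1, hx.2.2⟩
        omega
  intro y1 hy1 y2 hy2 heq
  simp only [Finset.mem_coe] at hy1 hy2
  by_contra hne
  rcases lt_trichotomy y1 y2 with h | h | h
  · exact main y1 y2 hy1 hy2 h heq
  · exact hne h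
  · exact main y2 y1 hy2 hy1 h heq.symm

lemma sum_Hv (C : Finset (Fin n)) (z : Fin n) (hz : z ∉ C) (q : ℝ) :
    ∑ y ∈ C, q ^ (Hv C.card C z y - 1) = ∑ j ∈ Finset.range C.card, q ^ j := by
  have himg : C.image (Hv C.card C z) = Finset.Icc 1 C.card := by
    apply Finset.eq_of_subset_of_card_le
    · intro m hm
      rw [Finset.mem_image] at hm
      obtain ⟨y, hy, rfl⟩ := hm
      exact Hv_mem C z y hz hy
    · rw [Finset.card_image_of_injOn (Hv_injOn C z hz), Nat.card_Icc]
      simp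
  have e1 : ∑ m ∈ C.image (Hv C.card C z), q ^ (m - 1)
      = ∑ y ∈ C, q ^ (Hv C.card C z y - 1) :=
    Finset.sum_image (fun x hx y hy h => Hv_injOn C z hz hx hy h)
  rw [← e1, himg]
  rw [Finset.sum_bij (fun (m : ℕ) (hm : m ∈ Finset.Icc 1 C.card) => m - 1)]
  · intro a ha
    rw [Finset.mem_Icc] at ha
    rw [Finset.mem_range]
    omega
  · intro a ha b hb h
    rw [Finset.mem_Icc] at ha hb
    omega
  · intro b hb
    rw [Finset.mem_range] at hb
    exact ⟨b + 1, Finset.mem_Icc.mpr (by omega), by omega⟩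
  · intro a ha
    rfl

end CardLemmas

/-- complement of the image of a top-k list -/
def Cset {n k : ℕ} (f : Fin k → Fin n) : Finset (Fin n) :=
  Finset.univ.filter (fun x : Fin n => x ∉ Finset.image f Finset.univ)

lemma mem_Cset {n k : ℕ} {f : Fin k → Fin n} {y : Fin n} :
    y ∈ Cset f ↔ y ∉ Set.range f := by
  simp [Cset]

lemma zC {n k : ℕ} (hk : 1 ≤ k) (f : Fin k → Fin n) :
    f ⟨k - 1, Nat.sub_lt hk Nat.one_pos⟩ ∉ Cset f := by
  rw [mem_Cset]
  intro h
  exact h ⟨_, rfl⟩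

lemma card_Cset {n k : ℕ} (hkn : k ≤ n) (f : Fin k → Fin n) (hf : Function.Injective f) :
    (Cset f).card = n - k := by
  have h1 : Cset f = (Finset.image f Finset.univ)ᶜ := by
    ext x; simp [Cset]
  rw [h1, Finset.card_compl, Finset.card_image_of_injective _ hf]
  simp

lemma snoc_mk_lt {n k : ℕ} (f : Fin k → Fin n) (y : Fin n) (i : ℕ) (hi : i < k)
    (hi' : i < k + 1) : (Fin.snoc f y : Fin (k+1) → Fin n) ⟨i, hi'⟩ = f ⟨i, hi⟩ := by
  have : (⟨i, hi'⟩ : Fin (k+1)) = Fin.castSucc ⟨i, hi⟩ := rfl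
  rw [this, Fin.snoc_castSucc]

lemma snoc_mk_last {n k : ℕ} (f : Fin k → Fin n) (y : Fin n) (h : k < k + 1) :
    (Fin.snoc f y : Fin (k+1) → Fin n) ⟨k, h⟩ = y := by
  have : (⟨k, h⟩ : Fin (k+1)) = Fin.last k := rfl
  rw [this, Fin.snoc_last]

lemma image_snoc {n k : ℕ} (f : Fin k → Fin n) (y : Fin n) :
    Finset.image (Fin.snoc f y : Fin (k+1) → Fin n) Finset.univ
      = insert y (Finset.image f Finset.univ) := by
  ext x
  simp only [Finset.mem_image, Finset.mem_insert, Finset.mem_univ, true_and]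
  constructor
  · rintro ⟨i, rfl⟩
    induction i using Fin.lastCases with
    | last => left; simp
    | cast j => right; exact ⟨j, by simp⟩
  · rintro (rfl | ⟨i, rfl⟩)
    · exact ⟨Fin.last k, by simp⟩
    · exact ⟨Fin.castSucc i, by simp⟩

lemma dtop_snoc {n k : ℕ} (hk : 1 ≤ k) (f : Fin k → Fin n) (y : Fin n) :
    dtop (Fin.snoc f y : Fin (k+1) → Fin n)
      = dtop f + (if y < f ⟨k - 1, by omega⟩ then n - k else 0) := by
  obtain ⟨m, rfl⟩ : ∃ m, k = m + 1 := ⟨k - 1, by omega⟩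
  show (∑ i : Fin (m + 1), _) = (∑ i : Fin m, _) + _
  rw [Fin.sum_univ_castSucc]
  congr 1
  · apply Finset.sum_congr rfl
    intro i _
    have hlt := i.isLt
    have h1' : i.val + 1 < m + 1 := by omega
    have h2' : i.val < m + 1 := by omega
    simp only [Fin.coe_castSucc]
    rw [snoc_mk_lt f y (i.val + 1) h1', snoc_mk_lt f y i.val h2']
  · simp only [Fin.val_last]
    rw [snoc_mk_last f y (by omega), snoc_mk_lt f y m (by omega)]
    simp

lemma Ltop_snoc {n k : ℕ} (f : Fin k → Fin n) (y : Fin n) :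
    Ltop (Fin.snoc f y : Fin (k+1) → Fin n)
      = (Finset.univ.filter
          (fun x : Fin n => x ∉ Finset.image f Finset.univ ∧ x < y)).card := by
  rw [Ltop, dif_pos (by omega : 0 < k + 1)]
  congr 1
  apply Finset.filter_congr
  intro x _
  simp only [Nat.add_sub_cancel]
  rw [image_snoc, snoc_mk_last f y (by omega)]
  simp only [Finset.mem_insert, not_or]
  constructor
  · rintro ⟨⟨_, h⟩, h2⟩; exact ⟨h, h2⟩
  · rintro ⟨h, h2⟩; exact ⟨⟨ne_of_lt h2, h⟩, h2⟩

lemma incr {n k : ℕ} (hk : 1 ≤ k) (hkn : k + 1 ≤ n) (f : Fin k → Fin n)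
    (hf : Function.Injective f) (y : Fin n) (hy : y ∉ Set.range f) :
    dtop (Fin.snoc f y : Fin (k+1) → Fin n) + Ltop (Fin.snoc f y : Fin (k+1) → Fin n) + 1
      = dtop f + Ltop f +
        (if f ⟨k - 1, Nat.sub_lt hk Nat.one_pos⟩ < y then
          (Finset.univ.filter (fun x : Fin n =>
            x ∉ Finset.image f Finset.univ ∧ f ⟨k - 1, Nat.sub_lt hk Nat.one_pos⟩ < x ∧ x ≤ y)).card
        else
          n - k - (Finset.univ.filter (fun x : Fin n =>
            x ∉ Finset.image f Finset.univ ∧ y < x ∧ x < f ⟨k - 1, Nat.sub_lt hk Nat.one_pos⟩)).card) := by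
  have hyC : y ∈ Finset.univ.filter (fun x : Fin n => x ∉ Finset.image f Finset.univ) := by
    rw [Finset.mem_filter]
    refine ⟨Finset.mem_univ _, ?_⟩
    rw [Finset.mem_image]
    rintro ⟨i, -, rfl⟩
    exact hy ⟨i, rfl⟩
  have hzC : f ⟨k - 1, Nat.sub_lt hk Nat.one_pos⟩ ∉
      Finset.univ.filter (fun x : Fin n => x ∉ Finset.image f Finset.univ) := by
    rw [Finset.mem_filter]
    rintro ⟨-, h⟩
    exact h (Finset.mem_image.mpr ⟨_, Finset.mem_univ _, rfl⟩)
  have hcard : (Finset.univ.filter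
      (fun x : Fin n => x ∉ Finset.image f Finset.univ)).card = n - k :=
    card_Cset (by omega : k ≤ n) f hf
  have hyz : y ≠ f ⟨k - 1, Nat.sub_lt hk Nat.one_pos⟩ := by
    intro h; exact hy ⟨_, h.symm⟩
  rw [dtop_snoc hk f y, Ltop_snoc f y, Ltop, dif_pos (by omega : 0 < k)]
  simp only [← Finset.filter_filter]
  by_cases hzy : f ⟨k - 1, Nat.sub_lt hk Nat.one_pos⟩ < y
  · rw [if_neg (lt_asymm hzy), if_pos hzy]
    have key := cardA2 _ _ y hzC hyC hzy
    simp only [← Finset.filter_filter] at key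
    omega
  · have hyz' : y < f ⟨k - 1, Nat.sub_lt hk Nat.one_pos⟩ :=
      lt_of_le_of_ne (not_lt.mp hzy) hyz
    rw [if_pos hyz', if_neg hzy]
    have key := cardA1 _ _ y hzC hyC hyz'
    simp only [← Finset.filter_filter] at key
    have hsub : ((Finset.univ.filter
        (fun x : Fin n => x ∉ Finset.image f Finset.univ)).filter
          (· < f ⟨k - 1, Nat.sub_lt hk Nat.one_pos⟩)).card ≤ n - k := by
      rw [← hcard]
      exact Finset.card_le_card (Finset.filter_subset _ _)
    omega

lemma Hval_eq_Hv {n k : ℕ} (hk : 1 ≤ k) (f : Fin k → Fin n) (y : Fin n) :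
    (if f ⟨k - 1, Nat.sub_lt hk Nat.one_pos⟩ < y then
        (Finset.univ.filter (fun x : Fin n =>
          x ∉ Finset.image f Finset.univ ∧ f ⟨k - 1, Nat.sub_lt hk Nat.one_pos⟩ < x ∧ x ≤ y)).card
      else
        n - k - (Finset.univ.filter (fun x : Fin n =>
          x ∉ Finset.image f Finset.univ ∧ y < x ∧ x < f ⟨k - 1, Nat.sub_lt hk Nat.one_pos⟩)).card)
      = Hv (n - k) (Cset f) (f ⟨k - 1, Nat.sub_lt hk Nat.one_pos⟩) y := by
  rw [Hv, Cset]
  simp only [Finset.filter_filter]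

/-- unnormalized prefix probability -/
noncomputable def S {n : ℕ} (q : ℝ) (k : ℕ) (h : k ≤ n) (f : Fin k → Fin n) : ℝ :=
  ∑ π : Equiv.Perm (Fin n), if ∀ i : Fin k, π (Fin.castLE h i) = f i then q ^ dR π else 0

lemma snoc_inj {n k : ℕ} {f : Fin k → Fin n} (hf : Function.Injective f) {y : Fin n}
    (hy : y ∉ Set.range f) : Function.Injective (Fin.snoc f y : Fin (k+1) → Fin n) := by
  intro a b hab
  induction a using Fin.lastCases with
  | last =>
    induction b using Fin.lastCases with
    | last => rfl
    | cast j => simp only [Fin.snoc_last, Fin.snoc_castSucc] at hab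
                exact absurd ⟨j, hab.symm⟩ hy
  | cast i =>
    induction b using Fin.lastCases with
    | last => simp only [Fin.snoc_last, Fin.snoc_castSucc] at hab
              exact absurd ⟨i, hab⟩ hy
    | cast j => simp only [Fin.snoc_castSucc] at hab
                exact congrArg Fin.castSucc (hf hab)

lemma S_split {n : ℕ} (q : ℝ) (k : ℕ) (hkn : k + 1 ≤ n) (f : Fin k → Fin n) :
    S q k (Nat.le_of_succ_le hkn) f = ∑ y ∈ Cset f, S q (k+1) hkn (Fin.snoc f y) := by
  simp only [S]
  rw [Finset.sum_comm]
  apply Finset.sum_congr rfl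
  intro π _
  have hiff : ∀ y : Fin n,
      (∀ i : Fin (k+1), π (Fin.castLE hkn i) = (Fin.snoc f y : Fin (k+1) → Fin n) i)
        ↔ ((∀ i : Fin k, π (Fin.castLE (by omega) i) = f i) ∧
            π (Fin.castLE hkn ⟨k, by omega⟩) = y) := by
    intro y
    constructor
    · intro h
      constructor
      · intro i
        have := h (Fin.castSucc i)
        rwa [Fin.snoc_castSucc] at this
      · have := h (Fin.last k)
        rwa [Fin.snoc_last] at this
    · rintro ⟨h1, h2⟩ i
      induction i using Fin.lastCases with
      | last => rw [Fin.snoc_last]; exact h2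
      | cast j => rw [Fin.snoc_castSucc]; exact h1 j
  by_cases hA : ∀ i : Fin k, π (Fin.castLE (by omega) i) = f i
  · have hmem : π (Fin.castLE hkn ⟨k, by omega⟩) ∈ Cset f := by
      rw [Cset, Finset.mem_filter]
      refine ⟨Finset.mem_univ _, ?_⟩
      rw [Finset.mem_image]
      rintro ⟨i, -, hi⟩
      rw [← hA i] at hi
      have := π.injective hi
      have : (Fin.castLE (by omega : k ≤ n) i).val = k := congrArg Fin.val this
      simp at this
      omega
    rw [if_pos hA]
    have hcong : ∀ y ∈ Cset f, (if ∀ i : Fin (k+1),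
            π (Fin.castLE hkn i) = (Fin.snoc f y : Fin (k+1) → Fin n) i then q ^ dR π else 0)
        = (if π (Fin.castLE hkn ⟨k, by omega⟩) = y then q ^ dR π else 0) :=
      fun y _ => if_congr ((hiff y).trans (and_iff_right hA)) rfl rfl
    rw [Finset.sum_congr rfl hcong,
      Finset.sum_ite_eq (Cset f) (π (Fin.castLE hkn ⟨k, by omega⟩)) (fun _ => q ^ dR π),
      if_pos hmem]
  · rw [if_neg hA]
    symm
    apply Finset.sum_eq_zero
    intro y _
    rw [if_neg]
    rw [hiff y]
    rintro ⟨h1, -⟩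
    exact hA h1

lemma S_base {n : ℕ} (q : ℝ) (h : n ≤ n) (f : Fin n → Fin n) (hf : Function.Injective f) :
    S q n h f = q ^ (dtop f + Ltop f) := by
  have hb : Function.Bijective f := ⟨hf, Finite.surjective_of_injective hf⟩
  set π₀ : Equiv.Perm (Fin n) := Equiv.ofBijective f hb with hπ₀
  have hcoe : ⇑π₀ = f := rfl
  have himg : Finset.image f Finset.univ = Finset.univ := by
    apply Finset.eq_univ_of_card
    rw [Finset.card_image_of_injective _ hf]
    simp
  have hL : Ltop f = 0 := by
    rw [Ltop]
    split
    · rw [Finset.card_eq_zero]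
      apply Finset.filter_eq_empty_iff.mpr
      intro x _
      rw [himg]
      simp
    · rfl
  have hd : dR π₀ = dtop f := rfl
  rw [S, Finset.sum_eq_single π₀]
  · have hcond : ∀ i : Fin n, π₀ (Fin.castLE h i) = f i := fun i => rfl
    rw [if_pos hcond, hd, hL, Nat.add_zero]
  · intro π _ hne
    rw [if_neg]
    intro hcond
    exact hne (Equiv.coe_fn_injective (funext fun i => hcond i))
  · intro habs
    exact absurd (Finset.mem_univ π₀) habs

lemma S_eq {n : ℕ} (q : ℝ) : ∀ (m k : ℕ) (hm : k + m = n) (hk : 1 ≤ k) (f : Fin k → Fin n)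
    (hf : Function.Injective f), S q k (by omega) f = q ^ (dtop f + Ltop f) * psi m q := by
  intro m
  induction m with
  | zero =>
    intro k hm hk f hf
    obtain rfl : k = n := by omega
    rw [S_base q (le_refl k) f hf, psi]
    simp
  | succ m ih =>
    intro k hm hk f hf
    have hkn : k + 1 ≤ n := by omega
    have hCcard : (Cset f).card = n - k := card_Cset (by omega) f hf
    have hcm : n - k = m + 1 := by omega
    rw [S_split q k hkn f]
    have hstep : ∀ y ∈ Cset f, S q (k+1) hkn (Fin.snoc f y)
        = q ^ (dtop f + Ltop f) * psi m q
          * q ^ (Hv (n - k) (Cset f) (f ⟨k - 1, Nat.sub_lt hk Nat.one_pos⟩) y - 1) := by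
      intro y hy
      have hyr : y ∉ Set.range f := mem_Cset.mp hy
      rw [ih (k+1) (by omega) (by omega) (Fin.snoc f y) (snoc_inj hf hyr)]
      have hH := Hv_mem (Cset f) (f ⟨k - 1, Nat.sub_lt hk Nat.one_pos⟩) y (zC hk f) hy
      rw [hCcard] at hH
      rw [Finset.mem_Icc] at hH
      have hincr := incr hk hkn f hf y hyr
      rw [Hval_eq_Hv hk f y] at hincr
      have hexp : dtop (Fin.snoc f y : Fin (k+1) → Fin n)
          + Ltop (Fin.snoc f y : Fin (k+1) → Fin n)
          = dtop f + Ltop f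
            + (Hv (n - k) (Cset f) (f ⟨k - 1, Nat.sub_lt hk Nat.one_pos⟩) y - 1) := by
        omega
      rw [hexp, pow_add, mul_assoc, mul_comm (q ^ (Hv _ _ _ _ - 1)) (psi m q), ← mul_assoc]
    rw [Finset.sum_congr rfl hstep, ← Finset.mul_sum]
    have hsum := sum_Hv (Cset f) (f ⟨k - 1, Nat.sub_lt hk Nat.one_pos⟩) (zC hk f) q
    rw [hCcard] at hsum
    rw [hsum, hcm]
    rw [psi, psi, Finset.prod_range_succ, mul_assoc]

theorem stmt6 (n k : ℕ) (hk : 1 ≤ k) (hkn : k + 1 ≤ n) (q : ℝ) (hq0 : 0 < q) (hq1 : q < 1)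
    (f : Fin k → Fin n) (hf : Function.Injective f) (y : Fin n) (hy : y ∉ Set.range f) :
    (∑ π : Equiv.Perm (Fin n),
        if ∀ i : Fin (k + 1), π (Fin.castLE hkn i) = (Fin.snoc f y : Fin (k + 1) → Fin n) i
        then q ^ dR π / psi n q else 0) /
      (∑ π : Equiv.Perm (Fin n),
        if ∀ i : Fin k, π (Fin.castLE (by omega) i) = f i then q ^ dR π / psi n q else 0)
    = q ^ ((if f ⟨k - 1, by omega⟩ < y then
            (Finset.univ.filter (fun x : Fin n =>
              x ∉ Finset.image f Finset.univ ∧ f ⟨k - 1, by omega⟩ < x ∧ x ≤ y)).card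
          else
            n - k - (Finset.univ.filter (fun x : Fin n =>
              x ∉ Finset.image f Finset.univ ∧ y < x ∧ x < f ⟨k - 1, by omega⟩)).card) - 1) /
        ∑ j ∈ Finset.range (n - k), q ^ j := by
  have hknn : k ≤ n := by omega
  have hnum : (∑ π : Equiv.Perm (Fin n),
      if ∀ i : Fin (k + 1), π (Fin.castLE hkn i) = (Fin.snoc f y : Fin (k + 1) → Fin n) i
      then q ^ dR π / psi n q else 0) = S q (k+1) hkn (Fin.snoc f y) / psi n q := by
    rw [S, Finset.sum_div]
    apply Finset.sum_congr rfl
    intro π _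
    by_cases hc : ∀ i : Fin (k + 1), π (Fin.castLE hkn i) = (Fin.snoc f y : Fin (k + 1) → Fin n) i
    · rw [if_pos hc, if_pos hc]
    · rw [if_neg hc, if_neg hc, zero_div]
  have hden : (∑ π : Equiv.Perm (Fin n),
      if ∀ i : Fin k, π (Fin.castLE hknn i) = f i then q ^ dR π / psi n q else 0)
      = S q k hknn f / psi n q := by
    rw [S, Finset.sum_div]
    apply Finset.sum_congr rfl
    intro π _
    by_cases hc : ∀ i : Fin k, π (Fin.castLE hknn i) = f i
    · rw [if_pos hc, if_pos hc]
    · rw [if_neg hc, if_neg hc, zero_div]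
  rw [hnum, hden]
  rw [S_eq q (n - (k+1)) (k+1) (by omega) (by omega) (Fin.snoc f y) (snoc_inj hf hy),
    S_eq q (n - k) k (by omega) hk f hf]
  -- exponent on the right
  have hexp_eq : ((if f ⟨k - 1, Nat.sub_lt hk Nat.one_pos⟩ < y then
            (Finset.univ.filter (fun x : Fin n =>
              x ∉ Finset.image f Finset.univ ∧ f ⟨k - 1, Nat.sub_lt hk Nat.one_pos⟩ < x ∧ x ≤ y)).card
          else
            n - k - (Finset.univ.filter (fun x : Fin n =>
              x ∉ Finset.image f Finset.univ ∧ y < x ∧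
                x < f ⟨k - 1, Nat.sub_lt hk Nat.one_pos⟩)).card))
      = Hv (n - k) (Cset f) (f ⟨k - 1, Nat.sub_lt hk Nat.one_pos⟩) y := Hval_eq_Hv hk f y
  rw [hexp_eq]
  have hyC : y ∈ Cset f := mem_Cset.mpr hy
  have hCcard : (Cset f).card = n - k := card_Cset hknn f hf
  have hH := Hv_mem (Cset f) (f ⟨k - 1, Nat.sub_lt hk Nat.one_pos⟩) y (zC hk f) hyC
  rw [hCcard, Finset.mem_Icc] at hH
  have hincr := incr hk hkn f hf y hy
  rw [Hval_eq_Hv hk f y] at hincr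
  have hA : dtop (Fin.snoc f y : Fin (k+1) → Fin n) + Ltop (Fin.snoc f y : Fin (k+1) → Fin n)
      = dtop f + Ltop f
        + (Hv (n - k) (Cset f) (f ⟨k - 1, Nat.sub_lt hk Nat.one_pos⟩) y - 1) := by omega
  rw [hA, pow_add]
  have hps : psi (n - k) q = psi (n - (k+1)) q * ∑ j ∈ Finset.range (n - k), q ^ j := by
    rw [show n - k = n - (k+1) + 1 by omega, psi, psi, Finset.prod_range_succ]
  rw [hps]
  have hpsi_pos : ∀ m : ℕ, 0 < psi m q := by
    intro m
    apply Finset.prod_pos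
    intro i _
    apply Finset.sum_pos
    · intro j _
      exact pow_pos hq0 j
    · exact Finset.nonempty_range_iff.mpr (by omega)
  have hsum_pos : 0 < ∑ j ∈ Finset.range (n - k), q ^ j := by
    apply Finset.sum_pos
    · intro j _
      exact pow_pos hq0 j
    · exact Finset.nonempty_range_iff.mpr (by omega)
  have h1 : psi n q ≠ 0 := ne_of_gt (hpsi_pos n)
  have h2 : psi (n - (k+1)) q ≠ 0 := ne_of_gt (hpsi_pos _)
  have h3 : (∑ j ∈ Finset.range (n - k), q ^ j) ≠ 0 := ne_of_gt hsum_pos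
  have h4 : q ^ (dtop f + Ltop f) ≠ 0 := pow_ne_zero _ (ne_of_gt hq0)
  field_simp
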